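/- Let R be a domain and g₁, …, g_k ∈ R \ {0} pairwise commuting elements. Let S = [g₁, …, g_k] and T = [g₁·…·g_k]. If S and T are left Ore sets in R, then the Ore localizations S⁻¹R and T⁻¹R are isomorphic as rings. -/

import Mathlib

/-- A subset `S` of a ring is multiplicatively closed: `1 ∈ S`, `0 ∉ S`,
and `S` is closed under multiplication. -/
def IsMultClosedSet {R : Type*} [Ring R] (S : Set R) : Prop :=
  (1 : R) ∈ S ∧ (0 : R) ∉ S ∧ ∀ s ∈ S, ∀ t ∈ S, s * t ∈ S

/-- A subset `T` with `0 ∉ T` is left saturated if `a * b ∈ T` implies `b ∈ T`. -/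
def LeftSaturatedSet {R : Type*} [Ring R] (T : Set R) : Prop :=
  (0 : R) ∉ T ∧ ∀ a b : R, a * b ∈ T → b ∈ T

/-- The left saturation closure `LSat(S) = {r | ∃ w, w * r ∈ S}`. -/
def LSat {R : Type*} [Ring R] (S : Set R) : Set R :=
  {r : R | ∃ w : R, w * r ∈ S}

/-- `S` satisfies the left Ore condition in `R`: for all `s ∈ S`, `r ∈ R`
there are `s' ∈ S`, `r' ∈ R` with `s' * r = r' * s`. -/
def LeftOreCond {R : Type*} [Ring R] (S : Set R) : Prop :=
  ∀ s ∈ S, ∀ r : R, ∃ s' ∈ S, ∃ r' : R, s' * r = r' * s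

/-- A left Ore set: multiplicatively closed and satisfying the left Ore condition. -/
def IsLeftOreSet {R : Type*} [Ring R] (S : Set R) : Prop :=
  IsMultClosedSet S ∧ LeftOreCond S

/-- `(A, φ)` is a left Ore localization of `R` at `S`: `φ` is injective, every
element of `S` becomes a unit, and every element of `A` is a left fraction
`φ(s)⁻¹ * φ(r)`, i.e. `φ s * x = φ r` for some `s ∈ S`, `r ∈ R`. -/
structure IsLeftOreLocalization {R A : Type*} [Ring R] [Ring A]
    (S : Set R) (φ : R →+* A) : Prop where
  injective : Function.Injective φ
  isUnit : ∀ s ∈ S, IsUnit (φ s)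
  surj : ∀ x : A, ∃ s ∈ S, ∃ r : R, φ s * x = φ r
section Aux

variable {R A B : Type*} [Ring R] [Ring A] [Ring B] {S : Set R}
  {φ : R →+* A} {φ' : R →+* B}

/-- Transfer of fraction presentations. -/
lemma ore_trans (hS : IsLeftOreSet S) (hφinj : Function.Injective φ)
    (hφ'U : ∀ s ∈ S, IsUnit (φ' s))
    {x : A} {y : B} {s : R} (hs : s ∈ S) {r : R}
    (h1 : φ s * x = φ r) (h2 : φ' s * y = φ' r) :
    ∀ s₁ ∈ S, ∀ r₁ : R, φ s₁ * x = φ r₁ → φ' s₁ * y = φ' r₁ := by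
  intro s₁ hs₁ r₁ h₁
  obtain ⟨u, hu, v, huv⟩ := hS.2 s hs s₁
  have hR : u * r₁ = v * r := by
    apply hφinj
    have h : φ (u * s₁) * x = φ (v * s) * x := by rw [huv]
    rw [map_mul, map_mul, mul_assoc, mul_assoc, h1, h₁, ← map_mul, ← map_mul] at h
    exact h
  have hB : φ' u * (φ' s₁ * y) = φ' u * φ' r₁ := by
    calc φ' u * (φ' s₁ * y) = φ' (u * s₁) * y := by rw [map_mul, mul_assoc]
      _ = φ' (v * s) * y := by rw [huv]
      _ = φ' v * (φ' s * y) := by rw [map_mul, mul_assoc]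
      _ = φ' (v * r) := by rw [h2, ← map_mul]
      _ = φ' (u * r₁) := by rw [hR]
      _ = φ' u * φ' r₁ := by rw [map_mul]
  exact (hφ'U u hu).mul_left_cancel hB

lemma exists_image (hS : IsLeftOreSet S) (hφ : IsLeftOreLocalization S φ)
    (hφ'U : ∀ s ∈ S, IsUnit (φ' s)) (x : A) :
    ∃ y : B, ∀ s ∈ S, ∀ r : R, φ s * x = φ r → φ' s * y = φ' r := by
  obtain ⟨s, hs, r, h⟩ := hφ.surj x
  refine ⟨↑(hφ'U s hs).unit⁻¹ * φ' r, ore_trans hS hφ.injective hφ'U hs h ?_⟩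
  rw [← mul_assoc, (hφ'U s hs).mul_val_inv, one_mul]

/-- Uniqueness of Ore localizations. -/
theorem loc_unique (hS : IsLeftOreSet S) (hφ : IsLeftOreLocalization S φ)
    (hφ' : IsLeftOreLocalization S φ') : Nonempty (A ≃+* B) := by
  have hU' : ∀ s ∈ S, IsUnit (φ' s) := hφ'.isUnit
  have hU : ∀ s ∈ S, IsUnit (φ s) := hφ.isUnit
  choose f hf using fun x => exists_image hS hφ hU' x
  choose e he using fun y => exists_image hS hφ' hU y
  have left_inv : ∀ x : A, e (f x) = x := by
    intro x
    obtain ⟨s, hs, r, h⟩ := hφ.surj x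
    have h1 : φ' s * f x = φ' r := hf x s hs r h
    have h2 : φ s * e (f x) = φ r := he (f x) s hs r h1
    exact (hU s hs).mul_left_cancel (h2.trans h.symm)
  have right_inv : ∀ y : B, f (e y) = y := by
    intro y
    obtain ⟨s, hs, r, h⟩ := hφ'.surj y
    have h1 : φ s * e y = φ r := he y s hs r h
    have h2 : φ' s * f (e y) = φ' r := hf (e y) s hs r h1
    exact (hU' s hs).mul_left_cancel (h2.trans h.symm)
  have map_add : ∀ x x' : A, f (x + x') = f x + f x' := by
    intro x x'
    obtain ⟨s, hs, r, h⟩ := hφ.surj x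
    obtain ⟨s', hs', r', h'⟩ := hφ.surj x'
    obtain ⟨u, hu, v, huv⟩ := hS.2 s' hs' s
    have hus : u * s ∈ S := hS.1.2.2 u hu s hs
    have t1 : φ (u * s) * x = φ (u * r) := by rw [map_mul, mul_assoc, h, ← map_mul]
    have t2 : φ (u * s) * x' = φ (v * r') := by
      rw [huv, map_mul, mul_assoc, h', ← map_mul]
    have hA : φ (u * s) * (x + x') = φ (u * r + v * r') := by
      rw [mul_add, t1, t2, map_add]
    have hB1 : φ' (u * s) * f (x + x') = φ' (u * r + v * r') :=
      hf (x + x') (u * s) hus (u * r + v * r') hA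
    have t1' : φ' (u * s) * f x = φ' (u * r) := by
      rw [map_mul, mul_assoc, hf x s hs r h, ← map_mul]
    have t2' : φ' (u * s) * f x' = φ' (v * r') := by
      rw [huv, map_mul, mul_assoc, hf x' s' hs' r' h', ← map_mul]
    have hB2 : φ' (u * s) * (f x + f x') = φ' (u * r + v * r') := by
      rw [mul_add, t1', t2', map_add]
    exact (hU' (u * s) hus).mul_left_cancel (hB1.trans hB2.symm)
  have map_mul : ∀ x x' : A, f (x * x') = f x * f x' := by
    intro x x'
    obtain ⟨s, hs, r, h⟩ := hφ.surj x
    obtain ⟨s', hs', r', h'⟩ := hφ.surj x'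
    obtain ⟨u, hu, t, hut⟩ := hS.2 s' hs' r
    have hus : u * s ∈ S := hS.1.2.2 u hu s hs
    have t1 : φ (u * s) * x = φ (u * r) := by rw [map_mul, mul_assoc, h, ← map_mul]
    have hA : φ (u * s) * (x * x') = φ (t * r') := by
      rw [← mul_assoc, t1, hut, map_mul, mul_assoc, h', ← map_mul]
    have hB1 : φ' (u * s) * f (x * x') = φ' (t * r') :=
      hf (x * x') (u * s) hus (t * r') hA
    have t1' : φ' (u * s) * f x = φ' (u * r) := by
      rw [map_mul, mul_assoc, hf x s hs r h, ← map_mul]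
    have hB2 : φ' (u * s) * (f x * f x') = φ' (t * r') := by
      rw [← mul_assoc, t1', hut, map_mul, mul_assoc, hf x' s' hs' r' h', ← map_mul]
    exact (hU' (u * s) hus).mul_left_cancel (hB1.trans hB2.symm)
  exact ⟨{ toFun := f, invFun := e, left_inv := left_inv, right_inv := right_inv,
           map_mul' := map_mul, map_add' := map_add }⟩

lemma factor_of_mem : ∀ (l : List R) (x : R), (∀ a ∈ l, a * x = x * a) → x ∈ l →
    ∃ q : R, l.prod = x * q := by
  intro l
  induction l with
  | nil => intro x _ hx; simp at hx
  | cons a t ih =>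
    intro x hc hx
    rcases List.mem_cons.mp hx with h | h
    · exact ⟨t.prod, by rw [List.prod_cons, h]⟩
    · obtain ⟨q, hq⟩ := ih x (fun b hb => hc b (List.mem_cons_of_mem a hb)) h
      refine ⟨a * q, ?_⟩
      rw [List.prod_cons, hq, ← mul_assoc, hc a List.mem_cons_self, mul_assoc]

end Aux

/-- for pairwise commuting nonzero `g₁, …, g_k` in a domain `R`,
if `S = [g₁, …, g_k]` and `T = [g₁⋯g_k]` are left Ore sets, then
`S⁻¹R ≅ T⁻¹R` as rings. -/
theorem stmt_14 {R A B : Type*} [Ring R] [IsDomain R] [Ring A] [Ring B]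
    {k : ℕ} (g : Fin k → R) (hg : ∀ i, g i ≠ 0)
    (hcomm : ∀ i j, g i * g j = g j * g i)
    (hS : IsLeftOreSet ((Submonoid.closure (Set.range g) : Submonoid R) : Set R))
    (hT : IsLeftOreSet ((Submonoid.closure {(List.ofFn g).prod} : Submonoid R) : Set R))
    (φ : R →+* A)
    (hφ : IsLeftOreLocalization ((Submonoid.closure (Set.range g) : Submonoid R) : Set R) φ)
    (φ' : R →+* B)
    (hφ' : IsLeftOreLocalization
      ((Submonoid.closure {(List.ofFn g).prod} : Submonoid R) : Set R) φ') :
    Nonempty (A ≃+* B) := by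
  set p : R := (List.ofFn g).prod with hp
  have hpS : p ∈ Submonoid.closure (Set.range g) :=
    Submonoid.list_prod_mem _ fun x hx =>
      Submonoid.subset_closure (List.mem_ofFn.mp hx)
  have hTS : ((Submonoid.closure {p} : Submonoid R) : Set R) ⊆
      ((Submonoid.closure (Set.range g) : Submonoid R) : Set R) := fun t ht =>
    Submonoid.closure_le.mpr (Set.singleton_subset_iff.mpr hpS) ht
  have hpT : p ∈ Submonoid.closure ({p} : Set R) := Submonoid.subset_closure rfl
  have hUnit : ∀ s ∈ ((Submonoid.closure (Set.range g) : Submonoid R) : Set R),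
      IsUnit (φ' s) := by
    intro s hs
    refine Submonoid.closure_induction (motive := fun x _ => IsUnit (φ' x)) ?_ ?_ ?_ hs
    · rintro x ⟨i, rfl⟩
      have hcl : ∀ a ∈ List.ofFn g, a * g i = g i * a := by
        intro a ha
        obtain ⟨j, rfl⟩ := List.mem_ofFn.mp ha
        exact hcomm j i
      obtain ⟨q, hq⟩ := factor_of_mem (List.ofFn g) (g i) hcl
        (List.mem_ofFn.mpr ⟨i, rfl⟩)
      have hcp : Commute (g i) p := Commute.list_prod_right _ _ fun x hx => by
        obtain ⟨j, rfl⟩ := List.mem_ofFn.mp hx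
        exact hcomm i j
      have hqc : g i * q = q * g i := by
        apply mul_left_cancel₀ (hg i)
        have h1 : g i * (g i * q) = (g i * q) * g i := by rw [← hq]; exact hcp
        rw [h1, mul_assoc]
      have hpu : IsUnit (φ' p) := hφ'.isUnit p hpT
      set x := φ' (g i) with hx
      set y := φ' q with hy
      have hxy : x * y = φ' p := by rw [hx, hy, ← map_mul, ← hq]
      have hyx : y * x = φ' p := by rw [hx, hy, ← map_mul, ← hqc, ← hq]
      have hxd : x * (y * ↑hpu.unit⁻¹) = 1 := by
        rw [← mul_assoc, hxy, hpu.mul_val_inv]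
      have hcx : (↑hpu.unit⁻¹ * y) * x = 1 := by
        rw [mul_assoc, hyx, hpu.val_inv_mul]
      have hcd : (↑hpu.unit⁻¹ * y : B) = y * ↑hpu.unit⁻¹ := by
        calc (↑hpu.unit⁻¹ * y : B)
            = (↑hpu.unit⁻¹ * y) * (x * (y * ↑hpu.unit⁻¹)) := by rw [hxd, mul_one]
          _ = ((↑hpu.unit⁻¹ * y) * x) * (y * ↑hpu.unit⁻¹) :=
              (mul_assoc (↑hpu.unit⁻¹ * y) x (y * ↑hpu.unit⁻¹)).symm
          _ = y * ↑hpu.unit⁻¹ := by rw [hcx, one_mul]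
      exact ⟨⟨x, y * ↑hpu.unit⁻¹, hxd, by rw [← hcd]; exact hcx⟩, rfl⟩
    · simp
    · intro a b _ _ ha hb
      rw [map_mul]
      exact ha.mul hb
  have hφ'S : IsLeftOreLocalization
      ((Submonoid.closure (Set.range g) : Submonoid R) : Set R) φ' := by
    refine ⟨hφ'.injective, hUnit, fun x => ?_⟩
    obtain ⟨t, ht, r, h⟩ := hφ'.surj x
    exact ⟨t, hTS ht, r, h⟩
  exact loc_unique hS hφ hφ'S
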